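/- Let a > 1 and let t : ℝ → ℝ be the expansive tent map t(x) = a − 2a|x − 1/2|. Let Λ ⊆ ℝ be the attractor of the iterated function system T₁x = x/(2a), T₂x = 1 − x/(2a), i.e. the unique nonempty compact set with Λ = T₁(Λ) ∪ T₂(Λ). Then Λ is invariant under t and the Li-Yorke pairs of t in Λ have full Hausdorff dimension: dim_H LY_t(Λ) = dim_H(Λ × Λ) = 2·log 2 / log(2a). -/

import Mathlib

open Filter Set MeasureTheory
open scoped NNReal ENNReal

noncomputable section

namespace LYTent
section
variable {r : ℝ}

/-- sign of coordinate -/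
def sg (α : ℕ → Bool) (n : ℕ) : ℝ := ∏ k ∈ Finset.range n, (if α k then (-1:ℝ) else 1)

def coef (r : ℝ) (α : ℕ → Bool) (n : ℕ) : ℝ := (if α n then sg α n else 0) * r ^ n

/-- coding map of the IFS -/
def cant (r : ℝ) (α : ℕ → Bool) : ℝ := ∑' n, coef r α n

def shf (α : ℕ → Bool) : ℕ → Bool := fun n => α (n + 1)


lemma abs_sg (α : ℕ → Bool) (n : ℕ) : |sg α n| = 1 := by
  unfold sg
  rw [Finset.abs_prod]
  refine Finset.prod_eq_one fun k _ => ?_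
  by_cases h : α k <;> simp [h]

lemma abs_coef_le {r : ℝ} (hr0 : 0 < r) (α : ℕ → Bool) (n : ℕ) :
    |coef r α n| ≤ r ^ n := by
  unfold coef
  rw [abs_mul, abs_pow, abs_of_pos hr0]
  by_cases h : α n <;> simp [h, abs_sg]
  positivity

lemma summable_coef {r : ℝ} (hr0 : 0 < r) (hr1 : r < 1) (α : ℕ → Bool) :
    Summable (coef r α) := by
  refine Summable.of_abs (Summable.of_nonneg_of_le (fun n => abs_nonneg _)
    (abs_coef_le hr0 α) ?_)
  exact summable_geometric_of_lt_one hr0.le hr1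

lemma abs_cant_le {r : ℝ} (hr0 : 0 < r) (hr1 : r < 1) (α : ℕ → Bool) :
    |cant r α| ≤ (1 - r)⁻¹ := by
  have h1 : |cant r α| ≤ ∑' n, r ^ n := by
    have hn : Summable fun n => |coef r α n| := (summable_coef hr0 hr1 α).abs
    calc |cant r α| ≤ ∑' n, |coef r α n| := by
          simpa [cant] using norm_tsum_le_tsum_norm (f := coef r α) (by simpa using hn)
    _ ≤ ∑' n, r ^ n := Summable.tsum_le_tsum (fun n => abs_coef_le hr0 α n) hn
        (summable_geometric_of_lt_one hr0.le hr1)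
  rwa [tsum_geometric_of_lt_one hr0.le hr1] at h1

lemma cant_rec {r : ℝ} (hr0 : 0 < r) (hr1 : r < 1) (α : ℕ → Bool) :
    cant r α = if α 0 then 1 - r * cant r (shf α) else r * cant r (shf α) := by
  have hs : Summable (coef r α) := summable_coef hr0 hr1 α
  have h0 : cant r α = coef r α 0 + ∑' n, coef r α (n + 1) := by
    unfold cant
    exact (Summable.tsum_eq_zero_add hs)
  have hco : ∀ n, coef r α (n + 1) = (if α 0 then (-1:ℝ) else 1) * r * coef r (shf α) n := by
    intro n
    unfold coef sg shf
    rw [Finset.prod_range_succ']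
    by_cases h : α (n + 1) <;> by_cases h0 : α 0 <;> simp [h, h0] <;> ring
  have : ∑' n, coef r α (n + 1) = (if α 0 then (-1:ℝ) else 1) * r * cant r (shf α) := by
    rw [tsum_congr hco, tsum_mul_left]
    rfl
  rw [h0, this]
  unfold coef sg
  by_cases h : α 0 <;> simp [h] <;> ring

lemma shf_iter (n : ℕ) (α : ℕ → Bool) (k : ℕ) : shf^[n] α k = α (k + n) := by
  induction n generalizing α k with
  | zero => rfl
  | succ n ih =>
    rw [Function.iterate_succ_apply, ih]
    simp [shf, Nat.add_assoc]

lemma cant_sub_of_agree (hr0 : 0 < r) (hr1 : r < 1) (m : ℕ) (α β : ℕ → Bool)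
    (h : ∀ i < m, α i = β i) :
    |cant r α - cant r β| = r ^ m * |cant r (shf^[m] α) - cant r (shf^[m] β)| := by
  induction m generalizing α β with
  | zero => simp
  | succ m ih =>
    have h0 : α 0 = β 0 := h 0 (Nat.succ_pos m)
    have hs : ∀ i < m, shf α i = shf β i := fun i hi => h (i + 1) (by omega)
    have key : |cant r α - cant r β| = r * |cant r (shf α) - cant r (shf β)| := by
      rw [cant_rec hr0 hr1 α, cant_rec hr0 hr1 β, h0]
      rcases Bool.eq_false_or_eq_true (β 0) with hb | hb <;> rw [hb] <;>
        simp only [Bool.false_eq_true, if_false, if_true]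
      · rw [show (1 - r * cant r (shf α)) - (1 - r * cant r (shf β)) =
          -(r * (cant r (shf α) - cant r (shf β))) by ring, abs_neg, abs_mul,
          abs_of_pos hr0]
      · rw [show r * cant r (shf α) - r * cant r (shf β) =
          r * (cant r (shf α) - cant r (shf β)) by ring, abs_mul, abs_of_pos hr0]
    rw [key, ih _ _ hs, Function.iterate_succ_apply, Function.iterate_succ_apply]
    ring

/-- word maps -/
def wrd (r : ℝ) : ℕ → (ℕ → Bool) → ℝ → ℝ
  | 0, _, x => x
  | (n+1), α, x => if α 0 then 1 - r * wrd r n (shf α) x else r * wrd r n (shf α) x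

lemma wrd_succ (n : ℕ) (α : ℕ → Bool) (x : ℝ) :
    wrd r (n+1) α x = if α 0 then 1 - r * wrd r n (shf α) x else r * wrd r n (shf α) x := rfl

lemma wrd_close (hr0 : 0 < r) (hr1 : r < 1) (n : ℕ) (α : ℕ → Bool) (x : ℝ) :
    |wrd r n α x - cant r α| = r ^ n * |x - cant r (shf^[n] α)| := by
  induction n generalizing α with
  | zero => simp [wrd]
  | succ n ih =>
    have key : |wrd r (n+1) α x - cant r α| = r * |wrd r n (shf α) x - cant r (shf α)| := by
      rw [cant_rec hr0 hr1 α, wrd_succ]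
      rcases Bool.eq_false_or_eq_true (α 0) with hb | hb <;> rw [hb] <;>
        simp only [Bool.false_eq_true, if_false, if_true]
      · rw [show (1 - r * wrd r n (shf α) x) - (1 - r * cant r (shf α)) =
          -(r * (wrd r n (shf α) x - cant r (shf α))) by ring, abs_neg, abs_mul,
          abs_of_pos hr0]
      · rw [show r * wrd r n (shf α) x - r * cant r (shf α) =
          r * (wrd r n (shf α) x - cant r (shf α)) by ring, abs_mul, abs_of_pos hr0]
    rw [key, ih, Function.iterate_succ_apply]
    ring

section Lam
variable {Λ : Set ℝ} (hΛc : IsCompact Λ) (hΛne : Λ.Nonempty)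
  (hΛ : Λ = (fun x => r * x) '' Λ ∪ (fun x => 1 - r * x) '' Λ)

include hΛ in
lemma lam_maps : ∀ y ∈ Λ, r * y ∈ Λ ∧ 1 - r * y ∈ Λ := by
  intro y hy
  constructor
  · rw [hΛ]; exact Or.inl (mem_image_of_mem _ hy)
  · rw [hΛ]; exact Or.inr (mem_image_of_mem _ hy)

include hΛc hΛne hΛ in
lemma lam_sub_Icc (hr0 : 0 < r) (hr1 : r < 1) : Λ ⊆ Icc (0:ℝ) 1 := by
  obtain ⟨R, hR⟩ := hΛc.isBounded.subset_closedBall 0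
  have hIne : (Icc (0:ℝ) 1).Nonempty := ⟨0, by norm_num⟩
  have hRnn : 0 ≤ R := by
    obtain ⟨z, hz⟩ := hΛne
    have h2 := hR hz
    simp only [Metric.mem_closedBall] at h2
    exact le_trans dist_nonneg h2
  have key : ∀ n, ∀ x ∈ Λ, Metric.infDist x (Icc (0:ℝ) 1) ≤ r ^ n * R := by
    intro n
    induction n with
    | zero =>
      intro x hx
      have h1 : Metric.infDist x (Icc (0:ℝ) 1) ≤ dist x 0 :=
        Metric.infDist_le_dist_of_mem (by norm_num)
      have h2 := hR hx
      simp only [Metric.mem_closedBall] at h2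
      simpa using h1.trans h2
    | succ n ih =>
      intro x hx
      rw [hΛ] at hx
      rcases hx with ⟨y, hy, hyx⟩ | ⟨y, hy, hyx⟩
      · obtain ⟨p, hp, hpd⟩ := isCompact_Icc.exists_infDist_eq_dist hIne y
        have hyx' : x = r * y := hyx.symm
        subst hyx'
        have hTp : r * p ∈ Icc (0:ℝ) 1 := ⟨by nlinarith [hp.1], by nlinarith [hp.1, hp.2]⟩
        have hd : dist (r * y) (r * p) = r * dist y p := by
          rw [Real.dist_eq, Real.dist_eq, ← mul_sub, abs_mul, abs_of_pos hr0]
        calc Metric.infDist (r * y) (Icc (0:ℝ) 1) ≤ dist (r * y) (r * p) :=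
              Metric.infDist_le_dist_of_mem hTp
        _ = r * Metric.infDist y (Icc (0:ℝ) 1) := by rw [hd, hpd]
        _ ≤ r * (r ^ n * R) := mul_le_mul_of_nonneg_left (ih y hy) hr0.le
        _ = r ^ (n+1) * R := by ring
      · obtain ⟨p, hp, hpd⟩ := isCompact_Icc.exists_infDist_eq_dist hIne y
        have hyx' : x = 1 - r * y := hyx.symm
        subst hyx'
        have hTp : 1 - r * p ∈ Icc (0:ℝ) 1 := ⟨by nlinarith [hp.1, hp.2], by nlinarith [hp.1]⟩
        have hd : dist (1 - r * y) (1 - r * p) = r * dist y p := by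
          rw [Real.dist_eq, Real.dist_eq,
            show (1 - r * y) - (1 - r * p) = -(r * (y - p)) by ring, abs_neg, abs_mul,
            abs_of_pos hr0]
        calc Metric.infDist (1 - r * y) (Icc (0:ℝ) 1) ≤ dist (1 - r * y) (1 - r * p) :=
              Metric.infDist_le_dist_of_mem hTp
        _ = r * Metric.infDist y (Icc (0:ℝ) 1) := by rw [hd, hpd]
        _ ≤ r * (r ^ n * R) := mul_le_mul_of_nonneg_left (ih y hy) hr0.le
        _ = r ^ (n+1) * R := by ring
  intro x hx
  have h0 : Metric.infDist x (Icc (0:ℝ) 1) = 0 := by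
    have hle : Metric.infDist x (Icc (0:ℝ) 1) ≤ 0 := by
      have ht : Tendsto (fun n : ℕ => r ^ n * R) atTop (nhds 0) := by
        simpa using (tendsto_pow_atTop_nhds_zero_of_lt_one hr0.le hr1).mul_const R
      exact ge_of_tendsto ht (Eventually.of_forall fun n => key n x hx)
    exact le_antisymm hle Metric.infDist_nonneg
  exact (IsClosed.mem_iff_infDist_zero isClosed_Icc hIne).2 h0

include hΛ in
lemma wrd_mem (n : ℕ) (α : ℕ → Bool) {x : ℝ} (hx : x ∈ Λ) : wrd r n α x ∈ Λ := by
  induction n generalizing α with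
  | zero => exact hx
  | succ n ih =>
    rw [wrd_succ]
    rcases Bool.eq_false_or_eq_true (α 0) with hb | hb <;> rw [hb] <;>
      simp only [Bool.false_eq_true, if_false, if_true]
    · exact (lam_maps hΛ _ (ih (shf α))).2
    · exact (lam_maps hΛ _ (ih (shf α))).1

include hΛc hΛne hΛ in
lemma cant_mem_lam (hr0 : 0 < r) (hr1 : r < 1) (α : ℕ → Bool) : cant r α ∈ Λ := by
  obtain ⟨z, hz⟩ := hΛne
  have hclosed : IsClosed Λ := hΛc.isClosed
  have htend : Tendsto (fun n => wrd r n α z) atTop (nhds (cant r α)) := by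
    rw [tendsto_iff_dist_tendsto_zero]
    have hbd : ∀ n, dist (wrd r n α z) (cant r α) ≤ r ^ n * (|z| + (1 - r)⁻¹) := by
      intro n
      rw [Real.dist_eq, wrd_close hr0 hr1]
      have h1 : |z - cant r (shf^[n] α)| ≤ |z| + (1 - r)⁻¹ := by
        calc |z - cant r (shf^[n] α)| ≤ |z| + |cant r (shf^[n] α)| := abs_sub _ _
        _ ≤ |z| + (1 - r)⁻¹ := by linarith [abs_cant_le hr0 hr1 (shf^[n] α)]
      have hrn : (0:ℝ) ≤ r ^ n := by positivity
      nlinarith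
    have ht : Tendsto (fun n : ℕ => r ^ n * (|z| + (1 - r)⁻¹)) atTop (nhds 0) := by
      simpa using (tendsto_pow_atTop_nhds_zero_of_lt_one hr0.le hr1).mul_const _
    exact squeeze_zero (fun n => dist_nonneg) hbd ht
  exact hclosed.mem_of_tendsto htend (Eventually.of_forall fun n => wrd_mem hΛ n α hz)

include hΛc hΛne hΛ in
lemma cant_mem_Icc (hr0 : 0 < r) (hr1 : r < 1) (α : ℕ → Bool) : cant r α ∈ Icc (0:ℝ) 1 :=
  lam_sub_Icc hΛc hΛne hΛ hr0 hr1 (cant_mem_lam hΛc hΛne hΛ hr0 hr1 α)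

end Lam

section Est
variable (h01 : ∀ γ : ℕ → Bool, cant r γ ∈ Icc (0:ℝ) 1)

include h01 in
lemma cant_close (hr0 : 0 < r) (hr1 : r < 1) (m : ℕ) (α β : ℕ → Bool)
    (h : ∀ i < m, α i = β i) : |cant r α - cant r β| ≤ r ^ m := by
  rw [cant_sub_of_agree hr0 hr1 m α β h]
  have h1 := h01 (shf^[m] α)
  have h2 := h01 (shf^[m] β)
  have : |cant r (shf^[m] α) - cant r (shf^[m] β)| ≤ 1 := by
    rw [abs_le]; constructor <;> [linarith [h1.1, h2.2]; linarith [h1.2, h2.1]]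
  nlinarith [pow_nonneg hr0.le m]

include h01 in
lemma cant_sep0 (hr0 : 0 < r) (hr1 : r < 1) (α β : ℕ → Bool) (h : α 0 ≠ β 0) :
    1 - 2 * r ≤ |cant r α - cant r β| := by
  have key : ∀ γ δ : ℕ → Bool, γ 0 = true → δ 0 = false →
      1 - 2 * r ≤ |cant r γ - cant r δ| := by
    intro γ δ hγ hδ
    rw [cant_rec hr0 hr1 γ, cant_rec hr0 hr1 δ, hγ, hδ]
    simp only [Bool.false_eq_true, if_false, if_true]
    have h1 := h01 (shf γ)
    have h2 := h01 (shf δ)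
    have hle : 1 - 2 * r ≤ 1 - r * cant r (shf γ) - r * cant r (shf δ) := by
      nlinarith [h1.2, h2.2]
    exact hle.trans (le_abs_self _)
  rcases Bool.eq_false_or_eq_true (α 0) with ha | ha <;>
    rcases Bool.eq_false_or_eq_true (β 0) with hb | hb
  · exact absurd (ha.trans hb.symm) h
  · exact key α β ha hb
  · rw [abs_sub_comm]; exact key β α hb ha
  · exact absurd (ha.trans hb.symm) h

include h01 in
lemma cant_sep (hr0 : 0 < r) (hr1 : r < 1) (k : ℕ) (α β : ℕ → Bool)
    (h : ∀ i < k, α i = β i) (hk : α k ≠ β k) :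
    (1 - 2 * r) * r ^ k ≤ |cant r α - cant r β| := by
  rw [cant_sub_of_agree hr0 hr1 k α β h]
  have hne : shf^[k] α 0 ≠ shf^[k] β 0 := by
    rw [shf_iter, shf_iter]; simpa using hk
  have := cant_sep0 h01 hr0 hr1 _ _ hne
  nlinarith [pow_pos hr0 k]

include h01 in
lemma tent_cant {a : ℝ} (ha : 1 < a) (hr : r = (2*a)⁻¹) (α : ℕ → Bool) :
    (fun x => a - 2 * a * |x - 1/2|) (cant r α) = cant r (shf α) := by
  have ha0 : (0:ℝ) < a := by linarith
  have hr0 : 0 < r := by rw [hr]; positivity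
  have hr2 : r < 1/2 := by
    rw [hr]
    rw [inv_lt_comm₀ (by positivity) (by norm_num)]
    norm_num; linarith
  have hr1 : r < 1 := by linarith
  have hc := h01 (shf α)
  set c := cant r (shf α) with hcdef
  have hrc : r * c ≤ 1/2 := by nlinarith [hc.1, hc.2]
  have h2ar : 2 * a * r = 1 := by rw [hr]; field_simp
  rw [cant_rec hr0 hr1 α]
  rcases Bool.eq_false_or_eq_true (α 0) with hb | hb <;> rw [hb] <;>
    simp only [Bool.false_eq_true, if_false, if_true]
  · show a - 2 * a * |1 - r * c - 1/2| = c
    rw [show (1 : ℝ) - r * c - 1/2 = 1/2 - r * c by ring, abs_of_nonneg (by linarith)]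
    nlinarith
  · show a - 2 * a * |r * c - 1/2| = c
    rw [abs_of_nonpos (by linarith), show -(r * c - 1/2) = 1/2 - r * c by ring]
    nlinarith

include h01 in
lemma tent_iter_cant {a : ℝ} (ha : 1 < a) (hr : r = (2*a)⁻¹) (n : ℕ) (α : ℕ → Bool) :
    (fun x => a - 2 * a * |x - 1/2|)^[n] (cant r α) = cant r (shf^[n] α) := by
  induction n generalizing α with
  | zero => rfl
  | succ n ih =>
    rw [Function.iterate_succ_apply', ih α, Function.iterate_succ_apply' shf]
    exact tent_cant h01 ha hr (shf^[n] α)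

end Est

/-- binary digit `k` of `x` -/
def dig (k : ℕ) (x : ℝ) : Bool := decide (⌊x * 2^(k+1)⌋ % 2 = 1)

lemma dig_step (m : ℕ) (x : ℝ) :
    ⌊x * 2^(m+1)⌋ = 2 * ⌊x * 2^m⌋ + (if dig m x then 1 else 0) := by
  have e : x * 2^(m+1) = (x * 2^m) * 2 := by ring
  have h1 : (2 * ⌊x * 2^m⌋ : ℤ) ≤ ⌊x * 2^(m+1)⌋ := by
    rw [Int.le_floor, e]
    push_cast
    linarith [Int.floor_le (x * 2^m)]
  have h2 : ⌊x * 2^(m+1)⌋ < 2 * ⌊x * 2^m⌋ + 2 := by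
    rw [Int.floor_lt, e]
    push_cast
    linarith [Int.lt_floor_add_one (x * 2^m)]
  by_cases h : ⌊x * 2^(m+1)⌋ % 2 = 1 <;> simp [dig, h] <;> omega

lemma floor_eq_of_digs (m : ℕ) {x y : ℝ} (hx : x ∈ Ico (0:ℝ) 1) (hy : y ∈ Ico (0:ℝ) 1)
    (h : ∀ k < m, dig k x = dig k y) : ⌊x * 2^m⌋ = ⌊y * 2^m⌋ := by
  induction m with
  | zero =>
    simp only [pow_zero, mul_one]
    rw [Int.floor_eq_zero_iff.2 (by exact ⟨hx.1, hx.2⟩),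
      Int.floor_eq_zero_iff.2 (by exact ⟨hy.1, hy.2⟩)]
  | succ m ih =>
    rw [dig_step m x, dig_step m y, ih (fun k hk => h k (by omega)), h m (by omega)]

lemma close_of_digs (m : ℕ) {x y : ℝ} (hx : x ∈ Ico (0:ℝ) 1) (hy : y ∈ Ico (0:ℝ) 1)
    (h : ∀ k < m, dig k x = dig k y) : |x - y| ≤ (2:ℝ)⁻¹ ^ m := by
  have hf := floor_eq_of_digs m hx hy h
  have h2m : (0:ℝ) < 2 ^ m := by positivity
  have h1 : |x * 2^m - y * 2^m| ≤ 1 := by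
    have hx1 := Int.floor_le (x * 2^m)
    have hx2 := Int.lt_floor_add_one (x * 2^m)
    have hy1 := Int.floor_le (y * 2^m)
    have hy2 := Int.lt_floor_add_one (y * 2^m)
    rw [abs_le]
    constructor <;> [linarith [hf ▸ hx1, hy2]; linarith [hf ▸ hy1, hx2]]
  have key : |x - y| * 2^m ≤ 1 := by
    have e : |x - y| * 2^m = |x * 2^m - y * 2^m| := by
      rw [← abs_of_pos h2m, ← abs_mul, sub_mul, abs_of_pos h2m]
    rw [e]; exact h1
  rw [inv_pow, inv_eq_one_div, le_div_iff₀ h2m]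
  exact key

lemma measurable_dig (k : ℕ) : Measurable fun x : ℝ => dig k x := by
  have h1 : Measurable fun x : ℝ => ⌊x * 2^(k+1)⌋ :=
    Int.measurable_floor.comp (measurable_id.mul_const _)
  have h2 : Measurable fun z : ℤ => decide (z % 2 = 1) := measurable_from_top
  exact h2.comp h1

def inSync (N n : ℕ) : Prop := ∃ j, N * 4^j ≤ n ∧ n < N * 4^j + j
def inDiff (N n : ℕ) : Prop := ∃ j, n = N * 4^j + j
def forcedP (N n : ℕ) : Prop := inSync N n ∨ inDiff N n
def freeP (N n : ℕ) : Prop := ¬ forcedP N n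

open Classical in
def cnt (N n : ℕ) : ℕ := ((Finset.range n).filter fun k => freeP N k).card

lemma lt_four_pow (j : ℕ) : j < 4 ^ j :=
  Nat.lt_pow_self (by norm_num)

lemma block_lt {N : ℕ} (hN : 1 ≤ N) {j j' : ℕ} (h : j' < j) :
    N * 4^j' + j' < N * 4^j := by
  have h1 : j' < 4 ^ j' := lt_four_pow j'
  have h2 : N * 4^(j'+1) ≤ N * 4^j := Nat.mul_le_mul_left N (Nat.pow_le_pow_right (by norm_num) h)
  have h3 : N * 4^(j'+1) = 4 * (N * 4^j') := by ring
  have h4 : 1 * 4^j' ≤ N * 4^j' := Nat.mul_le_mul_right _ hN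
  omega

lemma diff_not_sync {N : ℕ} (hN : 1 ≤ N) {n : ℕ} (h : inDiff N n) : ¬ inSync N n := by
  obtain ⟨j, rfl⟩ := h
  rintro ⟨j', hj1, hj2⟩
  rcases lt_trichotomy j' j with h' | rfl | h'
  · have := block_lt hN h'
    omega
  · omega
  · have h1 := block_lt hN (Nat.lt_succ_of_lt h')
    have h2 : j < 4 ^ j := lt_four_pow j
    have h3 : N * 4^(j+1) ≤ N * 4^j' :=
      Nat.mul_le_mul_left N (Nat.pow_le_pow_right (by norm_num) (Nat.succ_le_of_lt h'))
    have h4 : N * 4^(j+1) = 4 * (N * 4^j) := by ring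
    have h5 : 1 * 4^j ≤ N * 4^j := Nat.mul_le_mul_right _ hN
    omega

lemma free_unbounded {N : ℕ} (hN : 1 ≤ N) (M : ℕ) : ∃ n, M ≤ n ∧ freeP N n := by
  have key : ∀ j', N * 4^M + M + 1 < N * 4^j' ∨ N * 4^j' + j' < N * 4^M + M + 1 := by
    intro j'
    rcases lt_trichotomy j' M with h' | rfl | h'
    · have h2 : N * 4^j' + j' < N * 4^M := block_lt hN h'
      omega
    · right; omega
    · left
      have h3 : N * 4^(M+1) ≤ N * 4^j' :=
        Nat.mul_le_mul_left N (Nat.pow_le_pow_right (by norm_num) (Nat.succ_le_of_lt h'))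
      have h4 : N * 4^(M+1) = 4 * (N * 4^M) := by ring
      have h2 : M < 4 ^ M := lt_four_pow M
      have h5 : 1 * 4^M ≤ N * 4^M := Nat.mul_le_mul_right _ hN
      omega
  refine ⟨N * 4^M + M + 1, ?_, ?_⟩
  · have := lt_four_pow M
    have : 1 * 4^M ≤ N * 4^M := Nat.mul_le_mul_right _ hN
    omega
  · rintro (⟨j', hj1, hj2⟩ | ⟨j', hj⟩)
    · rcases key j' with h | h <;> omega
    · rcases key j' with h | h <;> omega

open Classical in
lemma cnt_succ (N n : ℕ) : cnt N (n+1) = cnt N n + (if freeP N n then 1 else 0) := by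
  unfold cnt
  rw [Finset.range_add_one, Finset.filter_insert]
  by_cases h : freeP N n <;> simp [h, Finset.card_insert_of_notMem]

lemma cnt_surj (N n : ℕ) : ∀ i < cnt N n, ∃ k < n, freeP N k ∧ cnt N k = i := by
  induction n with
  | zero => intro i hi; simp [cnt] at hi
  | succ n ih =>
    intro i hi
    rw [cnt_succ] at hi
    by_cases h : i < cnt N n
    · obtain ⟨k, hk, hfk, hck⟩ := ih i h
      exact ⟨k, by omega, hfk, hck⟩
    · have hfn : freeP N n := by
        by_contra hc
        simp [hc] at hi
        omega
      have : i = cnt N n := by simp [hfn] at hi; omega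
      exact ⟨n, by omega, hfn, this.symm⟩

open Classical in
lemma cnt_add_forced (N n : ℕ) :
    cnt N n + ((Finset.range n).filter fun k => forcedP N k).card = n := by
  unfold cnt freeP
  rw [add_comm]
  have h := Finset.card_filter_add_card_filter_not
    (s := Finset.range n) (p := fun k => forcedP N k)
  simp only [Finset.card_range] at h
  convert h using 3
  exact Finset.filter_congr_decidable _ _ _

open Classical in
lemma forced_card_bound {N : ℕ} (hN : 1 ≤ N) (m : ℕ) :
    ((((Finset.range m).filter fun k => forcedP N k).card : ℝ)) ^ 2 ≤ 4 * m / N := by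
  classical
  set S : Finset ℕ := (Finset.range m).filter fun j => N * 4^j < m with hS
  have hsub : ((Finset.range m).filter fun k => forcedP N k) ⊆
      S.biUnion fun j => Finset.Icc (N * 4^j) (N * 4^j + j) := by
    intro n hn
    simp only [Finset.mem_filter, Finset.mem_range] at hn
    obtain ⟨hnm, hf⟩ := hn
    have : ∃ j, N * 4^j ≤ n ∧ n ≤ N * 4^j + j := by
      rcases hf with ⟨j, h1, h2⟩ | ⟨j, h⟩
      · exact ⟨j, h1, by omega⟩
      · exact ⟨j, by omega, by omega⟩
    obtain ⟨j, h1, h2⟩ := this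
    have hjm : j ∈ S := by
      simp only [hS, Finset.mem_filter, Finset.mem_range]
      have hj4 : j < 4^j := lt_four_pow j
      have h5 : 1 * 4^j ≤ N * 4^j := Nat.mul_le_mul_right _ hN
      constructor <;> omega
    exact Finset.mem_biUnion.2 ⟨j, hjm, Finset.mem_Icc.2 ⟨h1, h2⟩⟩
  have hcard : ((Finset.range m).filter fun k => forcedP N k).card ≤
      ∑ j ∈ S, (j + 1) := by
    calc _ ≤ (S.biUnion fun j => Finset.Icc (N * 4^j) (N * 4^j + j)).card :=
          Finset.card_le_card hsub
    _ ≤ ∑ j ∈ S, (Finset.Icc (N * 4^j) (N * 4^j + j)).card := Finset.card_biUnion_le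
    _ = ∑ j ∈ S, (j + 1) := by
        refine Finset.sum_congr rfl fun j _ => ?_
        rw [Nat.card_Icc]
        omega
  -- if S is empty we are done
  rcases Finset.eq_empty_or_nonempty S with hSe | hSne
  · rw [hSe] at hcard
    simp only [Finset.sum_empty, Nat.le_zero] at hcard
    rw [hcard]
    push_cast
    rw [show ((0:ℝ))^2 = 0 by ring]
    positivity
  · set J := S.max' hSne with hJ
    have hJS : J ∈ S := S.max'_mem hSne
    have hJm : N * 4^J < m := (Finset.mem_filter.1 hJS).2
    have hsum : ∑ j ∈ S, (j + 1) ≤ 2 ^ (J + 1) := by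
      calc ∑ j ∈ S, (j + 1) ≤ ∑ j ∈ S, 2 ^ j := by
            refine Finset.sum_le_sum fun j _ => ?_
            exact Nat.lt_two_pow_self
      _ ≤ ∑ j ∈ Finset.range (J + 1), 2 ^ j := by
          refine Finset.sum_le_sum_of_subset fun j hj => ?_
          simp only [Finset.mem_range]
          exact Nat.lt_succ_of_le (S.le_max' j hj)
      _ = 2 ^ (J + 1) - 1 := by
          rw [Nat.geomSum_eq (by norm_num)]
          simp
      _ ≤ 2 ^ (J + 1) := Nat.sub_le _ _
    have hfin : ((Finset.range m).filter fun k => forcedP N k).card ≤ 2 ^ (J+1) :=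
      le_trans hcard hsum
    have hNpos : (0:ℝ) < N := by exact_mod_cast hN
    have h4J : (N:ℝ) * 4^J < m := by exact_mod_cast hJm
    calc ((((Finset.range m).filter fun k => forcedP N k).card : ℝ)) ^ 2
        ≤ ((2:ℝ) ^ (J+1)) ^ 2 := by
          have : (0:ℝ) ≤ (((Finset.range m).filter fun k => forcedP N k).card : ℝ) := by
            positivity
          have h2 : ((((Finset.range m).filter fun k => forcedP N k).card : ℝ)) ≤ (2:ℝ)^(J+1) := by
            exact_mod_cast hfin
          nlinarith
    _ = 4 * 4 ^ J := by
        rw [← pow_mul, show (J+1)*2 = 2*J + 2 by ring, pow_add,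
          show (4:ℝ) = 2^2 by norm_num, ← pow_mul]
        ring
    _ ≤ 4 * m / N := by
        rw [le_div_iff₀ hNpos]
        nlinarith [h4J]

def cns (b : Bool) (α : ℕ → Bool) : ℕ → Bool := fun k =>
  match k with
  | 0 => b
  | (k+1) => α k

lemma shf_cns (b : Bool) (α : ℕ → Bool) : shf (cns b α) = α := rfl
lemma cns_zero (b : Bool) (α : ℕ → Bool) : cns b α 0 = b := rfl

lemma wrd_cns (n : ℕ) (b : Bool) (α : ℕ → Bool) (x : ℝ) :
    wrd r (n+1) (cns b α) x = if b then 1 - r * wrd r n α x else r * wrd r n α x := rfl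

lemma wrd_congr (n : ℕ) (α β : ℕ → Bool) (x : ℝ) (h : ∀ i < n, α i = β i) :
    wrd r n α x = wrd r n β x := by
  induction n generalizing α β with
  | zero => rfl
  | succ n ih =>
    rw [wrd_succ, wrd_succ, h 0 (by omega), ih (shf α) (shf β) fun i hi => h (i+1) (by omega)]

lemma wrd_dist (hr0 : 0 < r) (n : ℕ) (α : ℕ → Bool) (u v : ℝ) :
    |wrd r n α u - wrd r n α v| = r ^ n * |u - v| := by
  induction n generalizing α with
  | zero => simp [wrd]
  | succ n ih =>
    have key : |wrd r (n+1) α u - wrd r (n+1) α v| =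
        r * |wrd r n (shf α) u - wrd r n (shf α) v| := by
      rw [wrd_succ, wrd_succ]
      rcases Bool.eq_false_or_eq_true (α 0) with hb | hb <;> rw [hb] <;>
        simp only [Bool.false_eq_true, if_false, if_true]
      · rw [show (1 - r * wrd r n (shf α) u) - (1 - r * wrd r n (shf α) v) =
          -(r * (wrd r n (shf α) u - wrd r n (shf α) v)) by ring, abs_neg, abs_mul,
          abs_of_pos hr0]
      · rw [show r * wrd r n (shf α) u - r * wrd r n (shf α) v =
          r * (wrd r n (shf α) u - wrd r n (shf α) v) by ring, abs_mul, abs_of_pos hr0]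
    rw [key, ih]
    ring

section Lam2
variable {Λ : Set ℝ} (hΛ : Λ = (fun x => r * x) '' Λ ∪ (fun x => 1 - r * x) '' Λ)

include hΛ in
lemma lam_cover (n : ℕ) : ∀ x ∈ Λ, ∃ (α : ℕ → Bool) (z : ℝ), z ∈ Λ ∧ x = wrd r n α z := by
  induction n with
  | zero => exact fun x hx => ⟨fun _ => false, x, hx, rfl⟩
  | succ n ih =>
    intro x hx
    rw [hΛ] at hx
    rcases hx with ⟨y, hy, hyx⟩ | ⟨y, hy, hyx⟩
    · obtain ⟨α, z, hz, hzy⟩ := ih y hy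
      refine ⟨cns false α, z, hz, ?_⟩
      rw [wrd_cns]
      simp only [Bool.false_eq_true, if_false]
      rw [← hzy, ← hyx]
    · obtain ⟨α, z, hz, hzy⟩ := ih y hy
      refine ⟨cns true α, z, hz, ?_⟩
      rw [wrd_cns]
      simp only [if_true]
      rw [← hzy, ← hyx]

end Lam2

/-- extension of a finite word to an infinite one -/
def extw {n : ℕ} (w : Fin n → Bool) : ℕ → Bool := fun k =>
  if h : k < n then w ⟨k, h⟩ else false

/-- basic interval of generation `n` -/
def Jint (r : ℝ) (n : ℕ) (w : Fin n → Bool) : Set ℝ := wrd r n (extw w) '' Icc 0 1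

lemma diam_Jint (hr0 : 0 < r) (n : ℕ) (w : Fin n → Bool) :
    EMetric.diam (Jint r n w) ≤ ENNReal.ofReal (r ^ n) := by
  refine EMetric.diam_le ?_
  rintro p ⟨u, hu, rfl⟩ q ⟨v, hv, rfl⟩
  rw [edist_dist, Real.dist_eq, wrd_dist hr0]
  refine ENNReal.ofReal_le_ofReal ?_
  have huv : |u - v| ≤ 1 := by
    rw [abs_le]
    constructor <;> [linarith [hu.1, hv.2]; linarith [hu.2, hv.1]]
  nlinarith [pow_nonneg hr0.le n]

lemma diam_prod_le (A B : Set ℝ) :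
    EMetric.diam (A ×ˢ B) ≤ max (EMetric.diam A) (EMetric.diam B) := by
  refine EMetric.diam_le ?_
  rintro ⟨p1, p2⟩ ⟨hp1, hp2⟩ ⟨q1, q2⟩ ⟨hq1, hq2⟩
  rw [Prod.edist_eq]
  exact max_le_max (EMetric.edist_le_diam_of_mem hp1 hq1)
    (EMetric.edist_le_diam_of_mem hp2 hq2)

section Cover
variable {Λ : Set ℝ} (hΛ : Λ = (fun x => r * x) '' Λ ∪ (fun x => 1 - r * x) '' Λ)
  (hΛI : Λ ⊆ Icc (0:ℝ) 1)

include hΛ hΛI in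
lemma lam_sub_Jint (n : ℕ) : Λ ⊆ ⋃ w : Fin n → Bool, Jint r n w := by
  intro x hx
  obtain ⟨α, z, hz, hzx⟩ := lam_cover hΛ n x hx
  refine mem_iUnion.2 ⟨fun i : Fin n => α i, ?_⟩
  refine ⟨z, hΛI hz, ?_⟩
  rw [hzx]
  refine (wrd_congr n _ α z fun i hi => ?_)
  simp [extw, hi]

include hΛ hΛI in
lemma prod_cover (n : ℕ) :
    Λ ×ˢ Λ ⊆ ⋃ i : (Fin n → Bool) × (Fin n → Bool), Jint r n i.1 ×ˢ Jint r n i.2 := by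
  rintro ⟨x, y⟩ ⟨hx, hy⟩
  obtain ⟨w, hw⟩ := mem_iUnion.1 (lam_sub_Jint hΛ hΛI n hx)
  obtain ⟨w', hw'⟩ := mem_iUnion.1 (lam_sub_Jint hΛ hΛI n hy)
  exact mem_iUnion.2 ⟨(w, w'), hw, hw'⟩

end Cover
/-- first symbolic sequence -/
def om (x : ℝ) : ℕ → Bool := fun n => dig n x

open Classical in
/-- second symbolic sequence, forced to synchronize/differ on the block structure -/
def ta (N : ℕ) (x y : ℝ) : ℕ → Bool := fun n =>
  if inSync N n then dig n x else if inDiff N n then !(dig n x) else dig (cnt N n) y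

/-- the pair map `ℝ² → ℝ²` -/
def pmap (r : ℝ) (N : ℕ) (p : ℝ × ℝ) : ℝ × ℝ :=
  (cant r (om p.1), cant r (ta N p.1 p.2))

lemma coef_eq (r : ℝ) (α : ℕ → Bool) (n : ℕ) :
    coef r α n = (if α n then (1:ℝ) else 0) * sg α n * r ^ n := by
  unfold coef
  by_cases h : α n <;> simp [h]

lemma continuous_cant (hr0 : 0 < r) (hr1 : r < 1) :
    Continuous fun α : ℕ → Bool => cant r α := by
  have hc : ∀ n, Continuous fun α : ℕ → Bool => coef r α n := by
    intro n
    have h1 : ∀ k, Continuous fun α : ℕ → Bool => (if α k then (-1:ℝ) else 1) := by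
      intro k
      exact (continuous_of_discreteTopology
        (f := fun b : Bool => (if b then (-1:ℝ) else 1))).comp (continuous_apply k)
    have hsg : Continuous fun α : ℕ → Bool => sg α n := by
      unfold sg
      exact continuous_finset_prod _ fun k _ => h1 k
    have h2 : Continuous fun α : ℕ → Bool => (if α n then (1:ℝ) else 0) :=
      (continuous_of_discreteTopology
        (f := fun b : Bool => (if b then (1:ℝ) else 0))).comp (continuous_apply n)
    simp only [coef_eq]
    exact ((h2.mul hsg).mul continuous_const)
  refine continuous_tsum hc (summable_geometric_of_lt_one hr0.le hr1) ?_
  intro n α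
  simpa [Real.norm_eq_abs] using abs_coef_le hr0 α n

lemma measurable_om_seq : Measurable fun p : ℝ × ℝ => om p.1 := by
  refine measurable_pi_lambda _ fun n => ?_
  exact (measurable_dig n).comp measurable_fst

variable {N : ℕ}

lemma ta_sync {x y : ℝ} {n : ℕ} (h : inSync N n) : ta N x y n = dig n x := by
  simp [ta, h]

lemma ta_diff (hN : 1 ≤ N) {x y : ℝ} {n : ℕ} (h : inDiff N n) : ta N x y n = !(dig n x) := by
  simp [ta, diff_not_sync hN h, h]

lemma ta_free {x y : ℝ} {n : ℕ} (h : freeP N n) : ta N x y n = dig (cnt N n) y := by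
  have h1 : ¬ inSync N n := fun hc => h (Or.inl hc)
  have h2 : ¬ inDiff N n := fun hc => h (Or.inr hc)
  simp [ta, h1, h2]

lemma measurable_ta_seq (N : ℕ) : Measurable fun p : ℝ × ℝ => ta N p.1 p.2 := by
  refine measurable_pi_lambda _ fun n => ?_
  by_cases h1 : inSync N n
  · have e : (fun p : ℝ × ℝ => ta N p.1 p.2 n) = fun p => dig n p.1 :=
      funext fun p => ta_sync h1
    rw [e]
    exact (measurable_dig n).comp measurable_fst
  · by_cases h2 : inDiff N n
    · have e : (fun p : ℝ × ℝ => ta N p.1 p.2 n) = fun p => !(dig n p.1) := by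
        funext p
        have h3 : ¬ inSync N n := h1
        simp [ta, h3, h2]
      rw [e]
      have hnot : Measurable fun b : Bool => !b := measurable_from_top
      exact hnot.comp ((measurable_dig n).comp measurable_fst)
    · have e : (fun p : ℝ × ℝ => ta N p.1 p.2 n) = fun p => dig (cnt N n) p.2 := by
        funext p
        simp [ta, h1, h2]
      rw [e]
      exact (measurable_dig (cnt N n)).comp measurable_snd

lemma measurable_pmap (hr0 : 0 < r) (hr1 : r < 1) (N : ℕ) :
    Measurable (pmap r N) := by
  refine Measurable.prod ?_ ?_
  · exact ((continuous_cant hr0 hr1).measurable).comp measurable_om_seq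
  · exact ((continuous_cant hr0 hr1).measurable).comp (measurable_ta_seq N)

section Mem
variable (h01 : ∀ γ : ℕ → Bool, cant r γ ∈ Icc (0:ℝ) 1) {N : ℕ} (hN : 1 ≤ N)

include h01 hN in
/-- liminf of the distance sequence is `0` -/
lemma pmap_liminf {a : ℝ} (ha : 1 < a) (hr : r = (2*a)⁻¹) (x y : ℝ) :
    liminf (fun n : ℕ => dist ((fun x => a - 2 * a * |x - 1/2|)^[n] (cant r (om x)))
      ((fun x => a - 2 * a * |x - 1/2|)^[n] (cant r (ta N x y)))) atTop = 0 := by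
  have ha0 : (0:ℝ) < a := by linarith
  have hr0 : 0 < r := by rw [hr]; positivity
  have hr2 : r < 1/2 := by
    rw [hr, inv_lt_comm₀ (by positivity) (by norm_num)]
    norm_num; linarith
  have hr1 : r < 1 := by linarith
  set g := fun n : ℕ => |cant r (shf^[n] (om x)) - cant r (shf^[n] (ta N x y))| with hg
  have hfeq : (fun n : ℕ => dist ((fun x => a - 2 * a * |x - 1/2|)^[n] (cant r (om x)))
      ((fun x => a - 2 * a * |x - 1/2|)^[n] (cant r (ta N x y)))) = g := by
    funext n
    rw [tent_iter_cant h01 ha hr n, tent_iter_cant h01 ha hr n, Real.dist_eq, hg]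
  rw [hfeq]
  have hnonneg : ∀ n, 0 ≤ g n := fun n => abs_nonneg _
  have hbddbelow : IsBoundedUnder (· ≥ ·) atTop g :=
    isBoundedUnder_of ⟨0, fun n => hnonneg n⟩
  have hgle : ∀ n, g n ≤ 1 := by
    intro n
    have h1 := h01 (shf^[n] (om x))
    have h2 := h01 (shf^[n] (ta N x y))
    rw [hg]
    simp only
    rw [abs_le]
    constructor <;> [linarith [h1.1, h2.2]; linarith [h1.2, h2.1]]
  have hbddabove : IsBoundedUnder (· ≤ ·) atTop g :=
    isBoundedUnder_of ⟨1, fun n => hgle n⟩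
  have hfreq : ∀ ε > 0, ∃ᶠ n in atTop, g n ≤ ε := by
    intro ε hε
    obtain ⟨j₀, hj₀⟩ := exists_pow_lt_of_lt_one hε hr1
    rw [frequently_atTop]
    intro M
    set j := max M j₀ with hj
    refine ⟨N * 4 ^ j, ?_, ?_⟩
    · have h1 : j < 4 ^ j := lt_four_pow j
      have h2 : 1 * 4 ^ j ≤ N * 4 ^ j := Nat.mul_le_mul_right _ hN
      omega
    · have hagree : ∀ i < j, shf^[N * 4 ^ j] (om x) i = shf^[N * 4 ^ j] (ta N x y) i := by
        intro i hi
        rw [shf_iter, shf_iter]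
        have hsync : inSync N (i + N * 4 ^ j) := ⟨j, by omega, by omega⟩
        rw [ta_sync hsync]
        rfl
      calc g (N * 4 ^ j) ≤ r ^ j := cant_close h01 hr0 hr1 j _ _ hagree
      _ ≤ r ^ j₀ := pow_le_pow_of_le_one hr0.le hr1.le (le_max_right M j₀)
      _ ≤ ε := hj₀.le
  have hle : liminf g atTop ≤ 0 := by
    refine le_of_forall_pos_le_add fun ε hε => ?_
    have h1 : liminf g atTop ≤ ε := liminf_le_of_frequently_le (hfreq ε hε) hbddbelow
    linarith
  have hge : 0 ≤ liminf g atTop :=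
    le_liminf_of_le hbddabove.isCoboundedUnder_ge (Eventually.of_forall hnonneg)
  linarith

include h01 hN in
/-- limsup of the distance sequence is positive -/
lemma pmap_limsup {a : ℝ} (ha : 1 < a) (hr : r = (2*a)⁻¹) (x y : ℝ) :
    0 < limsup (fun n : ℕ => dist ((fun x => a - 2 * a * |x - 1/2|)^[n] (cant r (om x)))
      ((fun x => a - 2 * a * |x - 1/2|)^[n] (cant r (ta N x y)))) atTop := by
  have ha0 : (0:ℝ) < a := by linarith
  have hr0 : 0 < r := by rw [hr]; positivity
  have hr2 : r < 1/2 := by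
    rw [hr, inv_lt_comm₀ (by positivity) (by norm_num)]
    norm_num; linarith
  have hr1 : r < 1 := by linarith
  set g := fun n : ℕ => |cant r (shf^[n] (om x)) - cant r (shf^[n] (ta N x y))| with hg
  have hfeq : (fun n : ℕ => dist ((fun x => a - 2 * a * |x - 1/2|)^[n] (cant r (om x)))
      ((fun x => a - 2 * a * |x - 1/2|)^[n] (cant r (ta N x y)))) = g := by
    funext n
    rw [tent_iter_cant h01 ha hr n, tent_iter_cant h01 ha hr n, Real.dist_eq, hg]
  rw [hfeq]
  have hgle : ∀ n, g n ≤ 1 := by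
    intro n
    have h1 := h01 (shf^[n] (om x))
    have h2 := h01 (shf^[n] (ta N x y))
    rw [hg]
    simp only
    rw [abs_le]
    constructor <;> [linarith [h1.1, h2.2]; linarith [h1.2, h2.1]]
  have hbddabove : IsBoundedUnder (· ≤ ·) atTop g :=
    isBoundedUnder_of ⟨1, fun n => hgle n⟩
  have hfreq : ∃ᶠ n in atTop, 1 - 2 * r ≤ g n := by
    rw [frequently_atTop]
    intro M
    refine ⟨N * 4 ^ M + M, ?_, ?_⟩
    · have h1 : M < 4 ^ M := lt_four_pow M
      have h2 : 1 * 4 ^ M ≤ N * 4 ^ M := Nat.mul_le_mul_right _ hN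
      omega
    · set n := N * 4 ^ M + M with hn
      have hd : inDiff N n := ⟨M, rfl⟩
      have hne : shf^[n] (om x) 0 ≠ shf^[n] (ta N x y) 0 := by
        rw [shf_iter, shf_iter]
        show om x (0 + n) ≠ ta N x y (0 + n)
        rw [Nat.zero_add, ta_diff hN hd]
        show dig n x ≠ !(dig n x)
        exact (Bool.not_ne_self (dig n x)).symm
      exact cant_sep0 h01 hr0 hr1 _ _ hne
  have := le_limsup_of_frequently_le hfreq hbddabove
  linarith

end Mem
lemma rpow_pow {r : ℝ} (hr0 : 0 < r) (d : ℝ) (n : ℕ) : (r ^ n) ^ d = (r ^ d) ^ n := by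
  rw [← Real.rpow_natCast r n, ← Real.rpow_mul hr0.le, mul_comm, Real.rpow_mul hr0.le,
    Real.rpow_natCast]

lemma inv_two_pow_eq (K : ℕ) : (2:ℝ)⁻¹ ^ K = Real.exp (-(K * Real.log 2)) := by
  have h1 : (2:ℝ)⁻¹ = Real.exp (-(Real.log 2)) := by
    rw [← Real.log_inv, Real.exp_log (by norm_num)]
  rw [h1, ← Real.exp_nat_mul]
  ring_nf

open Classical in
lemma keyexp {N : ℕ} (hN : 1 ≤ N) {r d δ : ℝ} (hr0 : 0 < r) (hd : 0 < d) (hδ : 0 < δ)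
    (hlog : d * Real.log r⁻¹ ≤ (2 - δ) * Real.log 2)
    (hNδ : 4 ≤ δ^2 * N) :
    ∀ m : ℕ, 1 ≤ m → (2:ℝ)⁻¹ ^ m * (2:ℝ)⁻¹ ^ (cnt N m) ≤ (r ^ m) ^ d := by
  intro m hm
  set F : ℕ := ((Finset.range m).filter fun k => forcedP N k).card with hFdef
  have hcf := cnt_add_forced N m
  have hF2 := forced_card_bound hN m
  have hm1 : (1:ℝ) ≤ m := by exact_mod_cast hm
  have hNpos : (0:ℝ) < N := by positivity
  have hFδ : (F:ℝ) ≤ δ * m := by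
    have h1 : (F:ℝ)^2 ≤ (δ * m)^2 := by
      have h2 : 4 * (m:ℝ) / N ≤ δ^2 * m^2 := by
        rw [div_le_iff₀ hNpos]
        nlinarith
      calc (F:ℝ)^2 ≤ 4 * m / N := hF2
      _ ≤ δ^2 * m^2 := h2
      _ = (δ * m)^2 := by ring
    calc (F:ℝ) = Real.sqrt ((F:ℝ)^2) := (Real.sqrt_sq (by positivity)).symm
    _ ≤ Real.sqrt ((δ * m)^2) := Real.sqrt_le_sqrt h1
    _ = δ * m := Real.sqrt_sq (by positivity)
  have hK : (2 - δ) * m ≤ ((m + cnt N m : ℕ) : ℝ) := by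
    have h1 : (cnt N m : ℝ) + F = m := by exact_mod_cast hcf
    push_cast
    linarith
  rw [← pow_add, inv_two_pow_eq, Real.rpow_def_of_pos (pow_pos hr0 m), Real.log_pow]
  rw [Real.exp_le_exp]
  have hlogr : Real.log r = -(Real.log r⁻¹) := by rw [Real.log_inv]; ring
  have hlog2 : (0:ℝ) ≤ Real.log 2 := Real.log_nonneg (by norm_num)
  have h2 : d * Real.log r⁻¹ * m ≤ (2 - δ) * Real.log 2 * m :=
    mul_le_mul_of_nonneg_right hlog (by positivity)
  have h3 : (2 - δ) * m * Real.log 2 ≤ ((m + cnt N m : ℕ) : ℝ) * Real.log 2 :=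
    mul_le_mul_of_nonneg_right hK hlog2
  rw [hlogr]
  nlinarith
def sq01 : Set (ℝ × ℝ) := Ico (0:ℝ) 1 ×ˢ Ico (0:ℝ) 1

def nu : Measure (ℝ × ℝ) := volume.restrict sq01

def mu (r : ℝ) (N : ℕ) : Measure (ℝ × ℝ) := Measure.map (pmap r N) nu

section Pin
variable (h01 : ∀ γ : ℕ → Bool, cant r γ ∈ Icc (0:ℝ) 1)
  (hr0 : 0 < r) (hr2 : r < 1/2) {N : ℕ}

include h01 hr0 hr2 in
/-- pinning estimate: a set of small diameter has small measure -/
lemma mu_pin (m : ℕ) (B : Set (ℝ × ℝ)) (hBm : MeasurableSet B)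
    (hdiam : EMetric.diam B < ENNReal.ofReal ((1 - 2*r) * r ^ m)) :
    mu r N B ≤ ENNReal.ofReal (4 * ((2:ℝ)⁻¹ ^ (m+1) * (2:ℝ)⁻¹ ^ (cnt N (m+1)))) := by
  have hr1 : r < 1 := by linarith
  have hmeas := measurable_pmap hr0 hr1 N
  rw [mu, Measure.map_apply hmeas hBm, nu, Measure.restrict_apply (hmeas hBm)]
  set E := pmap r N ⁻¹' B ∩ sq01 with hE
  rcases eq_empty_or_nonempty E with hEe | ⟨⟨x₀, y₀⟩, hp₀⟩
  · rw [hEe]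
    simp
  · have hsub : E ⊆ Icc (x₀ - (2:ℝ)⁻¹ ^ (m+1)) (x₀ + (2:ℝ)⁻¹ ^ (m+1)) ×ˢ
        Icc (y₀ - (2:ℝ)⁻¹ ^ (cnt N (m+1))) (y₀ + (2:ℝ)⁻¹ ^ (cnt N (m+1))) := by
      rintro ⟨x, y⟩ hp
      -- both image points lie in B
      have him : pmap r N (x, y) ∈ B := hp.1
      have him₀ : pmap r N (x₀, y₀) ∈ B := hp₀.1
      have hdist : dist (pmap r N (x, y)) (pmap r N (x₀, y₀)) < (1 - 2*r) * r ^ m := by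
        have h1 : edist (pmap r N (x, y)) (pmap r N (x₀, y₀)) ≤ EMetric.diam B :=
          EMetric.edist_le_diam_of_mem him him₀
        have h2 := lt_of_le_of_lt h1 hdiam
        rw [edist_dist] at h2
        exact (ENNReal.ofReal_lt_ofReal_iff_of_nonneg dist_nonneg).1 h2
      rw [Prod.dist_eq] at hdist
      have hd1 : dist (cant r (om x)) (cant r (om x₀)) < (1 - 2*r) * r ^ m :=
        lt_of_le_of_lt (le_max_left _ _) hdist
      have hd2 : dist (cant r (ta N x y)) (cant r (ta N x₀ y₀)) < (1 - 2*r) * r ^ m :=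
        lt_of_le_of_lt (le_max_right _ _) hdist
      -- pinning of symbol sequences
      have pin : ∀ (α β : ℕ → Bool), dist (cant r α) (cant r β) < (1 - 2*r) * r ^ m →
          ∀ k < m + 1, α k = β k := by
        intro α β hαβ k hk
        by_contra hne
        have hex : ∃ k, α k ≠ β k := ⟨k, hne⟩
        set k₀ := Nat.find hex with hk₀
        have hk₀le : k₀ ≤ m := le_trans (Nat.find_min' hex hne) (by omega)
        have hagree : ∀ i < k₀, α i = β i := fun i hi => not_not.1 (Nat.find_min hex hi)
        have hsep := cant_sep h01 hr0 hr1 k₀ α β hagree (Nat.find_spec hex)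
        have hmono : r ^ m ≤ r ^ k₀ := pow_le_pow_of_le_one hr0.le hr1.le hk₀le
        rw [Real.dist_eq] at hαβ
        nlinarith
      have hxa : ∀ k < m + 1, om x k = om x₀ k := pin _ _ hd1
      have hya : ∀ k < m + 1, ta N x y k = ta N x₀ y₀ k := pin _ _ hd2
      have hx01 : x ∈ Ico (0:ℝ) 1 := hp.2.1
      have hy01 : y ∈ Ico (0:ℝ) 1 := hp.2.2
      have hx01' : x₀ ∈ Ico (0:ℝ) 1 := hp₀.2.1
      have hy01' : y₀ ∈ Ico (0:ℝ) 1 := hp₀.2.2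
      have hxc : |x - x₀| ≤ (2:ℝ)⁻¹ ^ (m+1) :=
        close_of_digs (m+1) hx01 hx01' fun k hk => hxa k hk
      have hyd : ∀ i < cnt N (m+1), dig i y = dig i y₀ := by
        intro i hi
        obtain ⟨k, hk, hfree, hck⟩ := cnt_surj N (m+1) i hi
        have := hya k hk
        rw [ta_free hfree, ta_free hfree, hck] at this
        exact this
      have hyc : |y - y₀| ≤ (2:ℝ)⁻¹ ^ (cnt N (m+1)) :=
        close_of_digs _ hy01 hy01' hyd
      rw [abs_le] at hxc hyc
      exact ⟨⟨by linarith [hxc.1], by linarith [hxc.2]⟩,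
        ⟨by linarith [hyc.1], by linarith [hyc.2]⟩⟩
    calc volume E ≤ volume (Icc (x₀ - (2:ℝ)⁻¹ ^ (m+1)) (x₀ + (2:ℝ)⁻¹ ^ (m+1)) ×ˢ
        Icc (y₀ - (2:ℝ)⁻¹ ^ (cnt N (m+1))) (y₀ + (2:ℝ)⁻¹ ^ (cnt N (m+1)))) :=
          measure_mono hsub
    _ = ENNReal.ofReal (2 * (2:ℝ)⁻¹ ^ (m+1)) * ENNReal.ofReal (2 * (2:ℝ)⁻¹ ^ (cnt N (m+1))) := by
        rw [MeasureTheory.Measure.volume_eq_prod, Measure.prod_prod, Real.volume_Icc,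
          Real.volume_Icc]
        congr 1 <;> ring_nf
    _ = ENNReal.ofReal (4 * ((2:ℝ)⁻¹ ^ (m+1) * (2:ℝ)⁻¹ ^ (cnt N (m+1)))) := by
        rw [← ENNReal.ofReal_mul (by positivity)]
        ring_nf

include h01 hr0 hr2 in
lemma mu_frostman (hN : 1 ≤ N) (d : ℝ) (hd : 0 < d)
    (hkey : ∀ m : ℕ, 1 ≤ m → (2:ℝ)⁻¹ ^ m * (2:ℝ)⁻¹ ^ (cnt N m) ≤ (r ^ m) ^ d) :
    ∀ sset : Set (ℝ × ℝ), EMetric.diam sset ≤ ENNReal.ofReal ((1 - 2*r)/2) →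
      mu r N sset ≤ ENNReal.ofReal (4 * ((1 - 2*r)⁻¹) ^ d) * (EMetric.diam sset) ^ d := by
  have hr1 : r < 1 := by linarith
  have h12 : (0:ℝ) < 1 - 2*r := by linarith
  intro sset hsmall
  have hfin : EMetric.diam sset ≠ ⊤ :=
    ne_top_of_le_ne_top ENNReal.ofReal_ne_top hsmall
  set D := (EMetric.diam sset).toReal with hD
  have hD0 : 0 ≤ D := ENNReal.toReal_nonneg
  have hDdiam : EMetric.diam sset = ENNReal.ofReal D := (ENNReal.ofReal_toReal hfin).symm
  have hDlt : D < 1 - 2*r := by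
    have h1 : D ≤ (1 - 2*r)/2 := by
      rw [hDdiam] at hsmall
      exact (ENNReal.ofReal_le_ofReal_iff (by linarith)).1 hsmall
    linarith
  have claim : ∀ m : ℕ, D < (1 - 2*r) * r ^ m →
      mu r N sset ≤ ENNReal.ofReal (4 * ((2:ℝ)⁻¹ ^ (m+1) * (2:ℝ)⁻¹ ^ (cnt N (m+1)))) := by
    intro m hm
    refine le_trans (measure_mono subset_closure) (mu_pin h01 hr0 hr2 m (closure sset)
      measurableSet_closure ?_)
    rw [show EMetric.diam (closure sset) = EMetric.diam sset from Metric.ediam_closure sset, hDdiam]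
    exact (ENNReal.ofReal_lt_ofReal_iff (by positivity)).2 hm
  by_cases hDz : D = 0
  · have h0 : ∀ m : ℕ, mu r N sset ≤ ENNReal.ofReal (4 * (2:ℝ)⁻¹ ^ (m+1)) := by
      intro m
      refine le_trans (claim m (by rw [hDz]; positivity)) (ENNReal.ofReal_le_ofReal ?_)
      have h1 : (2:ℝ)⁻¹ ^ (cnt N (m+1)) ≤ 1 := pow_le_one₀ (by norm_num) (by norm_num)
      nlinarith [pow_nonneg (by norm_num : (0:ℝ) ≤ 2⁻¹) (m+1)]
    have hlim : Tendsto (fun m : ℕ => ENNReal.ofReal (4 * (2:ℝ)⁻¹ ^ (m+1))) atTop (nhds 0) := by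
      have hreal : Tendsto (fun m : ℕ => 4 * (2:ℝ)⁻¹ ^ (m+1)) atTop (nhds 0) := by
        have h1 : Tendsto (fun m : ℕ => (2:ℝ)⁻¹ ^ m) atTop (nhds 0) :=
          tendsto_pow_atTop_nhds_zero_of_lt_one (by norm_num) (by norm_num)
        have h2 := (h1.comp (tendsto_add_atTop_nat 1)).const_mul (4:ℝ)
        simpa using h2
      have := ENNReal.tendsto_ofReal hreal
      simpa using this
    have hzero : mu r N sset ≤ 0 := ge_of_tendsto hlim (Eventually.of_forall h0)
    exact le_trans hzero zero_le
  · have hDpos : 0 < D := lt_of_le_of_ne hD0 (Ne.symm hDz)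
    have hex : ∃ M, ¬ (D < (1 - 2*r) * r ^ M) := by
      obtain ⟨M, hM⟩ := exists_pow_lt_of_lt_one hDpos hr1
      refine ⟨M, not_lt.2 ?_⟩
      nlinarith [pow_nonneg hr0.le M]
    classical
    set k := Nat.find hex with hk
    have hk0 : k ≠ 0 := by
      intro hc
      have := Nat.find_spec hex
      rw [← hk, hc] at this
      simp only [pow_zero, mul_one] at this
      exact this hDlt
    obtain ⟨m, hm⟩ : ∃ m, k = m + 1 := ⟨k - 1, by omega⟩
    have hPm : D < (1 - 2*r) * r ^ m := by
      have := Nat.find_min hex (m := m) (by omega)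
      exact not_not.1 this
    have hup : (1 - 2*r) * r ^ (m+1) ≤ D := by
      have := Nat.find_spec hex
      rw [← hk, hm] at this
      exact not_lt.1 this
    have hrpowle : r ^ (m+1) ≤ (1 - 2*r)⁻¹ * D := by
      rw [← div_eq_inv_mul, le_div_iff₀ h12]
      linarith
    calc mu r N sset ≤ ENNReal.ofReal (4 * ((2:ℝ)⁻¹ ^ (m+1) * (2:ℝ)⁻¹ ^ (cnt N (m+1)))) :=
          claim m hPm
    _ ≤ ENNReal.ofReal (4 * (r ^ (m+1)) ^ d) := by
        refine ENNReal.ofReal_le_ofReal ?_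
        have := hkey (m+1) (by omega)
        linarith
    _ ≤ ENNReal.ofReal (4 * ((1 - 2*r)⁻¹ * D) ^ d) := by
        refine ENNReal.ofReal_le_ofReal ?_
        have h1 : (r ^ (m+1)) ^ d ≤ ((1 - 2*r)⁻¹ * D) ^ d :=
          Real.rpow_le_rpow (by positivity) hrpowle hd.le
        linarith
    _ = ENNReal.ofReal (4 * ((1 - 2*r)⁻¹) ^ d) * ENNReal.ofReal (D ^ d) := by
        rw [← ENNReal.ofReal_mul (by positivity)]
        congr 1
        rw [Real.mul_rpow (by positivity) hD0]
        ring
    _ = ENNReal.ofReal (4 * ((1 - 2*r)⁻¹) ^ d) * (EMetric.diam sset) ^ d := by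
        rw [hDdiam, ENNReal.ofReal_rpow_of_pos hDpos]

end Pin

end
end LYTent

open LYTent

/-- The set of Li-Yorke pairs of a map `f` inside an invariant set `Λ`. -/
def liYorkePairs {E : Type*} [PseudoMetricSpace E] (f : E → E) (Λ : Set E) :
    Set (E × E) :=
  {p | p.1 ∈ Λ ∧ p.2 ∈ Λ ∧
    liminf (fun n : ℕ => dist (f^[n] p.1) (f^[n] p.2)) atTop = 0 ∧
    0 < limsup (fun n : ℕ => dist (f^[n] p.1) (f^[n] p.2)) atTop}

/-- Let `a > 1` and let `t(x) = a − 2a|x − 1/2|` be the expansive tent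
map. Let `Λ` be the attractor of the IFS `T₁ x = x/(2a)`, `T₂ x = 1 − x/(2a)`. Then `Λ`
is invariant under `t` and the Li-Yorke pairs of `t` in `Λ` have full Hausdorff
dimension: `dim_H LY_t(Λ) = dim_H (Λ × Λ) = 2 log 2 / log (2a)`. -/
theorem dimH_liYorkePairs_tent_map (a : ℝ) (ha : 1 < a)
    (Λ : Set ℝ) (hΛc : IsCompact Λ) (hΛne : Λ.Nonempty)
    (hΛ : Λ = (fun x => x / (2 * a)) '' Λ ∪ (fun x => 1 - x / (2 * a)) '' Λ) :
    (fun x => a - 2 * a * |x - 1 / 2|) '' Λ = Λ ∧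
    dimH (liYorkePairs (fun x => a - 2 * a * |x - 1 / 2|) Λ) = dimH (Λ ×ˢ Λ) ∧
    dimH (Λ ×ˢ Λ) = ENNReal.ofReal (2 * Real.log 2 / Real.log (2 * a)) := by
  have h2a : (0:ℝ) < 2 * a := by linarith
  set r : ℝ := (2*a)⁻¹ with hrdef
  have hr0 : 0 < r := by positivity
  have hr2 : r < 1/2 := by
    rw [hrdef, inv_lt_comm₀ h2a (by norm_num)]
    norm_num; linarith
  have hr1 : r < 1 := by linarith
  have hΛr : Λ = (fun x => r * x) '' Λ ∪ (fun x => 1 - r * x) '' Λ := by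
    have e1 : (fun x : ℝ => x / (2*a)) = fun x => r * x := by
      funext x; rw [hrdef, div_eq_mul_inv, mul_comm]
    have e2 : (fun x : ℝ => 1 - x / (2*a)) = fun x => 1 - r * x := by
      funext x; rw [hrdef, div_eq_mul_inv, mul_comm]
    rw [← e1, ← e2]; exact hΛ
  have hΛI : Λ ⊆ Icc (0:ℝ) 1 := lam_sub_Icc hΛc hΛne hΛr hr0 hr1
  have h01 : ∀ γ : ℕ → Bool, cant r γ ∈ Icc (0:ℝ) 1 := cant_mem_Icc hΛc hΛne hΛr hr0 hr1
  have hmemΛ : ∀ γ : ℕ → Bool, cant r γ ∈ Λ := cant_mem_lam hΛc hΛne hΛr hr0 hr1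
  -- tent map computations
  have h2ar : 2 * a * r = 1 := by rw [hrdef]; field_simp
  have tcomp1 : ∀ y ∈ Icc (0:ℝ) 1, a - 2 * a * |r * y - 1 / 2| = y := by
    intro y hy
    have hry : r * y ≤ 1/2 := by nlinarith [hy.1, hy.2]
    rw [abs_of_nonpos (by linarith), show -(r * y - 1/2) = 1/2 - r * y by ring]
    nlinarith
  have tcomp2 : ∀ y ∈ Icc (0:ℝ) 1, a - 2 * a * |(1 - r * y) - 1 / 2| = y := by
    intro y hy
    have hry : r * y ≤ 1/2 := by nlinarith [hy.1, hy.2]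
    rw [show (1 - r * y) - 1/2 = 1/2 - r * y by ring, abs_of_nonneg (by linarith)]
    nlinarith
  -- Part 1 : invariance
  have part1 : (fun x => a - 2 * a * |x - 1 / 2|) '' Λ = Λ := by
    apply Subset.antisymm
    · rintro _ ⟨x, hx, rfl⟩
      rw [hΛr] at hx
      rcases hx with ⟨y, hy, rfl⟩ | ⟨y, hy, rfl⟩
      · show a - 2 * a * |r * y - 1 / 2| ∈ Λ
        rw [tcomp1 y (hΛI hy)]; exact hy
      · show a - 2 * a * |(1 - r * y) - 1 / 2| ∈ Λ
        rw [tcomp2 y (hΛI hy)]; exact hy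
    · intro y hy
      exact ⟨r * y, (lam_maps hΛr y hy).1, tcomp1 y (hΛI hy)⟩
  set s₀ : ℝ := 2 * Real.log 2 / Real.log (2*a) with hs₀
  have hlog2a : 0 < Real.log (2*a) := Real.log_pos (by linarith)
  have hlog2 : 0 < Real.log 2 := Real.log_pos (by norm_num)
  have hs₀pos : 0 < s₀ := by positivity
  have hlogr : Real.log r = -Real.log (2*a) := by rw [hrdef, Real.log_inv]
  set tm : ℝ → ℝ := (fun x : ℝ => a - 2 * a * |x - 1 / 2|) with htm
  have hLYsub : liYorkePairs tm Λ ⊆ Λ ×ˢ Λ := fun p hp => ⟨hp.1, hp.2.1⟩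
  -- ============ upper bound ============
  have upper : dimH (Λ ×ˢ Λ) ≤ ENNReal.ofReal s₀ := by
    refine dimH_le fun d' hd' => ?_
    by_contra hgt
    have hds : s₀ < (d' : ℝ) := by
      rw [not_le] at hgt
      have h1 : ENNReal.ofReal s₀ < ((d' : ℝ≥0) : ℝ≥0∞) := hgt
      rw [ENNReal.ofReal, ENNReal.coe_lt_coe] at h1
      have h2 : (s₀.toNNReal : ℝ) < (d' : ℝ) := h1
      rwa [Real.coe_toNNReal s₀ hs₀pos.le] at h2
    set d : ℝ := (d' : ℝ) with hd
    have hd0 : 0 < d := lt_trans hs₀pos hds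
    have hrd : 4 * r ^ d < 1 := by
      have hdl : 2 * Real.log 2 < d * Real.log (2*a) := by
        rw [hs₀, div_lt_iff₀ hlog2a] at hds
        linarith
      have h1 : r ^ d = Real.exp (Real.log r * d) := Real.rpow_def_of_pos hr0 d
      have h2 : Real.exp (Real.log r * d) < Real.exp (-(2 * Real.log 2)) := by
        rw [Real.exp_lt_exp, hlogr]
        nlinarith
      have h3 : Real.exp (-(2 * Real.log 2)) = 4⁻¹ := by
        rw [show (2:ℝ) * Real.log 2 = Real.log 4 by
          rw [show (4:ℝ) = 2^2 by norm_num, Real.log_pow]; push_cast; ring]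
        rw [Real.exp_neg, Real.exp_log (by norm_num)]
      rw [h1] at *
      rw [h3] at h2
      nlinarith
    have hzero : μH[d] (Λ ×ˢ Λ) = 0 := by
      have hcov := MeasureTheory.Measure.hausdorffMeasure_le_liminf_sum
        (ι := fun n : ℕ => (Fin n → Bool) × (Fin n → Bool)) d (Λ ×ˢ Λ)
        (fun n => ENNReal.ofReal (r ^ n))
        (by
          rw [show (0:ℝ≥0∞) = ENNReal.ofReal 0 by simp]
          exact ENNReal.tendsto_ofReal (tendsto_pow_atTop_nhds_zero_of_lt_one hr0.le hr1))
        (fun n i => Jint r n i.1 ×ˢ Jint r n i.2)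
        (Eventually.of_forall fun n => fun i =>
          le_trans (diam_prod_le _ _)
            (max_le (diam_Jint hr0 n i.1) (diam_Jint hr0 n i.2)))
        (Eventually.of_forall fun n => prod_cover hΛr hΛI n)
      have hsumle : ∀ n : ℕ,
          (∑ i : (Fin n → Bool) × (Fin n → Bool),
            EMetric.diam (Jint r n i.1 ×ˢ Jint r n i.2) ^ d)
          ≤ ENNReal.ofReal ((4 * r ^ d) ^ n) := by
        intro n
        have hcard : (Fintype.card ((Fin n → Bool) × (Fin n → Bool)) : ℝ≥0∞) =
            ((2^n * 2^n : ℕ) : ℝ≥0∞) := by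
          norm_num [Fintype.card_prod, Fintype.card_fun]
        calc (∑ i : (Fin n → Bool) × (Fin n → Bool),
            EMetric.diam (Jint r n i.1 ×ˢ Jint r n i.2) ^ d)
            ≤ ∑ _i : (Fin n → Bool) × (Fin n → Bool), ENNReal.ofReal (r ^ n) ^ d := by
              refine Finset.sum_le_sum fun i _ => ?_
              refine ENNReal.rpow_le_rpow ?_ hd0.le
              exact le_trans (diam_prod_le _ _)
                (max_le (diam_Jint hr0 n i.1) (diam_Jint hr0 n i.2))
        _ = (Fintype.card ((Fin n → Bool) × (Fin n → Bool)) : ℝ≥0∞) *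
              ENNReal.ofReal (r ^ n) ^ d := by
            rw [Finset.sum_const, Finset.card_univ, nsmul_eq_mul]
        _ = ENNReal.ofReal ((4 * r ^ d) ^ n) := by
            have hreal : ((2^n * 2^n : ℕ) : ℝ) * (r ^ d) ^ n = (4 * r ^ d) ^ n := by
              push_cast
              rw [mul_pow, show (4:ℝ) = 2 * 2 by norm_num, mul_pow]
            rw [hcard, ENNReal.ofReal_rpow_of_pos (by positivity), rpow_pow hr0 d n,
              show ((2^n * 2^n : ℕ) : ℝ≥0∞) = ENNReal.ofReal ((2^n * 2^n : ℕ) : ℝ) by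
                rw [ENNReal.ofReal_natCast],
              ← ENNReal.ofReal_mul (by positivity), hreal]
      have hlim : Tendsto (fun n : ℕ => ENNReal.ofReal ((4 * r ^ d) ^ n)) atTop (nhds 0) := by
        rw [show (0:ℝ≥0∞) = ENNReal.ofReal 0 by simp]
        refine ENNReal.tendsto_ofReal ?_
        refine tendsto_pow_atTop_nhds_zero_of_lt_one (by positivity) hrd
      have h2 : liminf (fun n : ℕ => ∑ i : (Fin n → Bool) × (Fin n → Bool),
          EMetric.diam (Jint r n i.1 ×ˢ Jint r n i.2) ^ d) atTop ≤ 0 := by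
        calc liminf (fun n : ℕ => ∑ i : (Fin n → Bool) × (Fin n → Bool),
            EMetric.diam (Jint r n i.1 ×ˢ Jint r n i.2) ^ d) atTop
            ≤ liminf (fun n : ℕ => ENNReal.ofReal ((4 * r ^ d) ^ n)) atTop :=
              liminf_le_liminf (Eventually.of_forall hsumle)
        _ = 0 := hlim.liminf_eq
      exact le_antisymm (le_trans hcov h2) zero_le
    rw [hd'] at hzero
    simp at hzero
  -- ============ lower bound ============
  have lower : ENNReal.ofReal s₀ ≤ dimH (liYorkePairs tm Λ) := by
    have inner : ∀ d : ℝ, 0 < d → d < s₀ → ENNReal.ofReal d ≤ dimH (liYorkePairs tm Λ) := by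
      intro d hd0 hds
      set δ : ℝ := 2 - d * Real.log (2*a) / Real.log 2 with hδdef
      have hδ : 0 < δ := by
        rw [hδdef]
        have h1 : d * Real.log (2*a) < 2 * Real.log 2 := by
          rw [hs₀, lt_div_iff₀ hlog2a] at hds
          linarith
        rw [sub_pos, div_lt_iff₀ hlog2]
        linarith
      set N : ℕ := max 1 (Nat.ceil (4/(δ*δ))) with hNdef
      have hN : 1 ≤ N := le_max_left _ _
      have hNδ : 4 ≤ δ^2 * N := by
        have h1 : (4/(δ*δ) : ℝ) ≤ (Nat.ceil (4/(δ*δ)) : ℝ) := Nat.le_ceil _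
        have h2 : ((Nat.ceil (4/(δ*δ)) : ℕ) : ℝ) ≤ (N : ℝ) := by
          exact_mod_cast le_max_right 1 (Nat.ceil (4/(δ*δ)))
        have h3 : (4/(δ*δ) : ℝ) ≤ N := le_trans h1 h2
        rw [div_le_iff₀ (by positivity)] at h3
        nlinarith
      have hlogineq : d * Real.log r⁻¹ ≤ (2 - δ) * Real.log 2 := by
        rw [hrdef, inv_inv]
        rw [hδdef]
        have : (2 - (2 - d * Real.log (2*a) / Real.log 2)) * Real.log 2
            = d * Real.log (2*a) := by
          field_simp
          ring
        rw [this]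
      have hkey := keyexp hN hr0 hd0 hδ hlogineq hNδ
      -- the measure and Frostman bound
      set C : ℝ≥0∞ := ENNReal.ofReal (4 * ((1 - 2*r)⁻¹) ^ d) with hC
      have hCpos : 0 < (4 * ((1 - 2*r)⁻¹) ^ d : ℝ) := by
        have := Real.rpow_pos_of_pos (show (0:ℝ) < (1 - 2*r)⁻¹ by
          rw [inv_pos]; linarith) d
        positivity
      have hC0 : C ≠ 0 := by
        rw [hC]
        simpa using hCpos
      have hCt : C ≠ ⊤ := ENNReal.ofReal_ne_top
      set m' : Measure (ℝ × ℝ) := C⁻¹ • mu r N with hm'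
      have hfro : ∀ sset : Set (ℝ × ℝ),
          EMetric.diam sset ≤ ENNReal.ofReal ((1 - 2*r)/2) →
          m' sset ≤ EMetric.diam sset ^ d := by
        intro sset hs
        rw [hm', Measure.smul_apply, smul_eq_mul]
        calc C⁻¹ * mu r N sset ≤ C⁻¹ * (C * EMetric.diam sset ^ d) := by
              refine mul_le_mul_right ?_ _
              exact mu_frostman h01 hr0 hr2 hN d hd0 hkey sset hs
        _ = EMetric.diam sset ^ d := by
            rw [← mul_assoc, ENNReal.inv_mul_cancel hC0 hCt, one_mul]
      have hle : m' ≤ μH[d] :=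
        MeasureTheory.Measure.le_hausdorffMeasure d m' _ (by
          rw [ENNReal.ofReal_pos]; linarith) hfro
      -- the Li-Yorke set has full preimage
      have hLYuniv : pmap r N ⁻¹' (liYorkePairs tm Λ) = univ := by
        rw [eq_univ_iff_forall]
        intro p
        refine ⟨hmemΛ _, hmemΛ _, ?_, ?_⟩
        · exact pmap_liminf h01 hN ha hrdef p.1 p.2
        · exact pmap_limsup h01 hN ha hrdef p.1 p.2
      have hnu1 : nu univ = 1 := by
        rw [nu, Measure.restrict_apply_univ, sq01, MeasureTheory.Measure.volume_eq_prod,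
          Measure.prod_prod, Real.volume_Ico]
        norm_num
      have hmu1 : 1 ≤ mu r N (liYorkePairs tm Λ) := by
        have h1 := MeasureTheory.Measure.le_map_apply (μ := nu)
          ((measurable_pmap hr0 hr1 N).aemeasurable) (liYorkePairs tm Λ)
        rw [hLYuniv, hnu1] at h1
        exact h1
      have hpos : 0 < μH[d] (liYorkePairs tm Λ) := by
        have h1 : m' (liYorkePairs tm Λ) ≤ μH[d] (liYorkePairs tm Λ) :=
          Measure.le_iff'.1 hle _
        have h2 : C⁻¹ ≤ m' (liYorkePairs tm Λ) := by
          rw [hm', Measure.smul_apply, smul_eq_mul]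
          calc C⁻¹ = C⁻¹ * 1 := by rw [mul_one]
          _ ≤ C⁻¹ * mu r N (liYorkePairs tm Λ) := mul_le_mul_right hmu1 _
        have h3 : (0:ℝ≥0∞) < C⁻¹ := by
          rw [ENNReal.inv_pos]
          exact hCt
        exact lt_of_lt_of_le h3 (le_trans h2 h1)
      -- convert to dimH
      have hcast : ENNReal.ofReal d = ((d.toNNReal : ℝ≥0) : ℝ≥0∞) := rfl
      rw [hcast]
      refine le_dimH_of_hausdorffMeasure_ne_zero (d := d.toNNReal) ?_
      rw [show ((d.toNNReal : ℝ≥0) : ℝ) = d from Real.coe_toNNReal d hd0.le]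
      exact hpos.ne'
    refine le_of_forall_lt fun c hc => ?_
    have hcne : c ≠ ⊤ := by
      intro hct
      rw [hct] at hc
      exact (not_top_lt hc)
    have hctr : c.toReal < s₀ := by
      have := ENNReal.toReal_lt_toReal hcne ((ENNReal.ofReal_ne_top : ENNReal.ofReal s₀ ≠ ⊤))
      rw [ENNReal.toReal_ofReal hs₀pos.le] at this
      exact this.2 hc
    set d : ℝ := max ((c.toReal + s₀)/2) (s₀/2) with hddef
    have hd0 : 0 < d := lt_of_lt_of_le (by linarith) (le_max_right _ _)
    have hds : d < s₀ := by
      rw [hddef]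
      refine max_lt (by linarith [ENNReal.toReal_nonneg (a := c)]) (by linarith)
    have hcd : c < ENNReal.ofReal d := by
      have h1 : c.toReal < d := lt_of_lt_of_le (by linarith) (le_max_left _ _)
      calc c = ENNReal.ofReal c.toReal := (ENNReal.ofReal_toReal hcne).symm
      _ < ENNReal.ofReal d := by
          rw [ENNReal.ofReal_lt_ofReal_iff hd0]
          exact h1
    exact lt_of_lt_of_le hcd (inner d hd0 hds)
  -- ============ conclusion ============
  have hchain : dimH (liYorkePairs tm Λ) ≤ dimH (Λ ×ˢ Λ) := dimH_mono hLYsub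
  have e3 : dimH (Λ ×ˢ Λ) = ENNReal.ofReal s₀ :=
    le_antisymm upper (le_trans lower hchain)
  exact ⟨part1, le_antisymm hchain (e3 ▸ lower), e3⟩

end
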